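/- Let m ≥ 1 and let α, β, γ₁, …, γ_m be nonzero complex numbers such that all the denominators appearing below are nonzero. For any proper subset N ⊊ {1,…,m}, the following identity holds: [∏_{n∈N} γ_n / ((α − ∏_{n∈N} γ_n)(β − ∏_{n∈N} γ_n))] · ( (α − ∏_{k} γ_k)(β − ∏_{k} γ_k)/∏_{k} γ_k + Σ_{I : N ⊆ I ⊊ {1,…,m}} ∏_{j∉I}(γ_j − 1) · ( αβ/∏_k γ_k + (−1)^{m−|I|} ∏_{i∈I} γ_i ) ) = 1. -/

import Mathlib

open Finset

theorem stmt6 (m : ℕ) (hm : 1 ≤ m) (α β : ℂ) (γ : Fin m → ℂ)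
    (hα0 : α ≠ 0) (hβ0 : β ≠ 0) (hγ0 : ∀ k, γ k ≠ 0)
    (N : Finset (Fin m)) (hN : N ≠ Finset.univ)
    (hαN : α ≠ ∏ n ∈ N, γ n) (hβN : β ≠ ∏ n ∈ N, γ n) :
    ((∏ n ∈ N, γ n) / ((α - ∏ n ∈ N, γ n) * (β - ∏ n ∈ N, γ n))) *
      ((α - ∏ k, γ k) * (β - ∏ k, γ k) / (∏ k, γ k) +
        ∑ I ∈ (Finset.univ : Finset (Fin m)).powerset.filter
            (fun I => N ⊆ I ∧ I ≠ Finset.univ),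
          (∏ j ∈ Iᶜ, (γ j - 1)) *
            (α * β / (∏ k, γ k) + (-1 : ℂ) ^ (m - I.card) * ∏ i ∈ I, γ i))
      = 1 := by
  classical
  set P : ℂ := ∏ k, γ k with hP
  set G : ℂ := ∏ n ∈ N, γ n with hG
  set Q : ℂ := ∏ j ∈ Nᶜ, γ j with hQdef
  have hGne : G ≠ 0 := prod_ne_zero_iff.mpr (fun k _ => hγ0 k)
  have hQne : Q ≠ 0 := prod_ne_zero_iff.mpr (fun k _ => hγ0 k)
  have hPGQ : P = G * Q := (prod_mul_prod_compl N γ).symm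
  set F : Finset (Fin m) → ℂ := fun I =>
    (∏ j ∈ Iᶜ, (γ j - 1)) *
      (α * β / P + (-1 : ℂ) ^ (m - I.card) * ∏ i ∈ I, γ i) with hF
  have hfilter : (Finset.univ : Finset (Fin m)).powerset.filter
      (fun I => N ⊆ I ∧ I ≠ Finset.univ)
      = ((Finset.univ : Finset (Fin m)).powerset.filter (fun I => N ⊆ I)).erase
          Finset.univ := by
    ext I
    simp [mem_erase, and_comm]
  have huniv_mem : (Finset.univ : Finset (Fin m)) ∈
      (Finset.univ : Finset (Fin m)).powerset.filter (fun I => N ⊆ I) := by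
    simp
  have hsum_erase :
      ∑ I ∈ (Finset.univ : Finset (Fin m)).powerset.filter
          (fun I => N ⊆ I ∧ I ≠ Finset.univ), F I
      = (∑ I ∈ (Finset.univ : Finset (Fin m)).powerset.filter (fun I => N ⊆ I), F I)
          - F Finset.univ := by
    rw [hfilter, Finset.sum_erase_eq_sub huniv_mem]
  have hre : ∑ I ∈ (Finset.univ : Finset (Fin m)).powerset.filter (fun I => N ⊆ I), F I
      = ∑ J ∈ Nᶜ.powerset, F (N ∪ J) := by
    apply Finset.sum_nbij' (fun I => I \ N) (fun J => N ∪ J)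
    · intro I hI
      simp only [mem_filter, mem_powerset] at hI
      simp [mem_powerset, subset_iff, mem_sdiff, mem_compl]
    · intro J hJ
      simp only [mem_powerset] at hJ
      simp only [mem_filter, mem_powerset]
      exact ⟨subset_univ _, subset_union_left⟩
    · intro I hI
      simp only [mem_filter, mem_powerset] at hI
      exact Finset.union_sdiff_of_subset hI.2
    · intro J hJ
      simp only [mem_powerset] at hJ
      rw [Finset.union_sdiff_cancel_left]
      exact (disjoint_compl_right.mono_right hJ)
    · intro I hI
      simp only [mem_filter, mem_powerset] at hI
      rw [Finset.union_sdiff_of_subset hI.2]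
  have hsummand : ∀ J ∈ Nᶜ.powerset, F (N ∪ J)
      = (∏ j ∈ Nᶜ \ J, (γ j - 1)) * (α * β / P)
        + G * ((∏ i ∈ J, γ i) * ∏ j ∈ Nᶜ \ J, (1 - γ j)) := by
    intro J hJ
    simp only [mem_powerset] at hJ
    have hdisj : Disjoint N J := (disjoint_compl_right.mono_right hJ)
    have hcompl : (N ∪ J)ᶜ = Nᶜ \ J := by
      ext j
      simp only [Finset.mem_compl, Finset.mem_union, Finset.mem_sdiff]
      tauto
    have hcard : m - (N ∪ J).card = (Nᶜ \ J).card := by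
      rw [Finset.card_sdiff_of_subset hJ, Finset.card_union_of_disjoint hdisj,
        Finset.card_compl, Fintype.card_fin]
      omega
    have hsign : ((-1 : ℂ)) ^ (Nᶜ \ J).card * ∏ j ∈ Nᶜ \ J, (γ j - 1)
        = ∏ j ∈ Nᶜ \ J, (1 - γ j) := by
      rw [← Finset.prod_const (-1 : ℂ), ← Finset.prod_mul_distrib]
      apply Finset.prod_congr rfl
      intro j _; ring
    rw [hF]
    simp only [hcompl, hcard, Finset.prod_union hdisj]
    rw [mul_add]
    congr 1
    rw [← hsign]; ring
  have hsum1 : ∑ J ∈ Nᶜ.powerset, ∏ j ∈ Nᶜ \ J, (γ j - 1) = Q := by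
    have := Finset.prod_add (fun _ : Fin m => (1 : ℂ)) (fun j => γ j - 1) Nᶜ
    simp only [Finset.prod_const_one, one_mul] at this
    rw [← this]
    apply Finset.prod_congr rfl
    intro j _; ring
  have hsum2 : ∑ J ∈ Nᶜ.powerset, (∏ i ∈ J, γ i) * ∏ j ∈ Nᶜ \ J, (1 - γ j) = 1 := by
    have := Finset.prod_add (fun j => γ j) (fun j => 1 - γ j) Nᶜ
    simp only [add_sub_cancel] at this
    rw [← this]
    simp
  have hFuniv : F Finset.univ = α * β / P + P := by
    rw [hF]
    simp [Finset.card_univ]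
    exact hP.symm
  have hsum : ∑ I ∈ (Finset.univ : Finset (Fin m)).powerset.filter
      (fun I => N ⊆ I ∧ I ≠ Finset.univ), F I
      = α * β / P * Q + G - (α * β / P + P) := by
    rw [hsum_erase, hre, Finset.sum_congr rfl hsummand, Finset.sum_add_distrib,
      ← Finset.sum_mul, ← Finset.mul_sum, hsum1, hsum2, hFuniv]
    ring
  show G / ((α - G) * (β - G)) *
      ((α - P) * (β - P) / P + ∑ I ∈ (Finset.univ : Finset (Fin m)).powerset.filter
          (fun I => N ⊆ I ∧ I ≠ Finset.univ), F I) = 1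
  rw [hsum, hPGQ]
  have hαG : α - G ≠ 0 := sub_ne_zero.mpr hαN
  have hβG : β - G ≠ 0 := sub_ne_zero.mpr hβN
  field_simp
  ring
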